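/- Let b and c be nonzero vectors in ℝ², let θ be a real number with 0 ≤ θ ≤ π/2, and suppose the angle between b and c is at most 2θ. Then every point p on the segment [b, c] satisfies ‖p‖ ≥ min(‖b‖, ‖c‖) · cos θ. -/

import Mathlib

/-- Key estimate in the proof of Proposition 3.7: if the angle between the nonzero
vectors `b` and `c` is at most `2θ` with `0 ≤ θ ≤ π/2`, then every point of the
segment `[b, c]` has norm at least `min ‖b‖ ‖c‖ · cos θ`. -/
theorem norm_segment_ge_of_angle_le
    (b c : EuclideanSpace ℝ (Fin 2)) (hb : b ≠ 0) (hc : c ≠ 0)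
    (θ : ℝ) (hθ0 : 0 ≤ θ) (hθ1 : θ ≤ Real.pi / 2)
    (hangle : InnerProductGeometry.angle b c ≤ 2 * θ) :
    ∀ p ∈ segment ℝ b c, min ‖b‖ ‖c‖ * Real.cos θ ≤ ‖p‖ := by
  rintro p ⟨s, t, hs, ht, hst, rfl⟩
  set k := Real.cos θ with hk
  set m := min ‖b‖ ‖c‖ with hm
  have hk0 : 0 ≤ k := Real.cos_nonneg_of_mem_Icc ⟨by linarith [Real.pi_pos], hθ1⟩
  have hk1 : k ≤ 1 := Real.cos_le_one θ
  have hα0 : 0 ≤ InnerProductGeometry.angle b c := InnerProductGeometry.angle_nonneg b c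
  have hcos : Real.cos (2 * θ) ≤ Real.cos (InnerProductGeometry.angle b c) :=
    Real.cos_le_cos_of_nonneg_of_le_pi hα0 (by linarith) hangle
  have h2θ : Real.cos (2 * θ) = 2 * k ^ 2 - 1 := by
    rw [Real.cos_two_mul, hk]
  have hinner : (inner ℝ b c : ℝ) =
      Real.cos (InnerProductGeometry.angle b c) * (‖b‖ * ‖c‖) :=
    (InnerProductGeometry.cos_angle_mul_norm_mul_norm b c).symm
  have hbc : ‖b‖ * ‖c‖ * (2 * k ^ 2 - 1) ≤ (inner ℝ b c : ℝ) := by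
    rw [hinner, ← h2θ]
    nlinarith [mul_nonneg (norm_nonneg b) (norm_nonneg c), hcos]
  have hb0 : 0 < ‖b‖ := norm_pos_iff.mpr hb
  have hc0 : 0 < ‖c‖ := norm_pos_iff.mpr hc
  have hmb : m ≤ ‖b‖ := min_le_left _ _
  have hmc : m ≤ ‖c‖ := min_le_right _ _
  have hm0 : 0 < m := lt_min hb0 hc0
  have hexp : ‖s • b + t • c‖ ^ 2 =
      s ^ 2 * ‖b‖ ^ 2 + 2 * s * t * (inner ℝ b c : ℝ) + t ^ 2 * ‖c‖ ^ 2 := by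
    rw [norm_add_sq_real, norm_smul, norm_smul, real_inner_smul_left,
      real_inner_smul_right, Real.norm_eq_abs, Real.norm_eq_abs, mul_pow, mul_pow,
      sq_abs, sq_abs]
    ring
  have hsq : (m * k) ^ 2 ≤ ‖s • b + t • c‖ ^ 2 := by
    rw [hexp]
    have hsum : m ≤ s * ‖b‖ + t * ‖c‖ := by nlinarith
    nlinarith [mul_nonneg (mul_nonneg hs ht) (sub_nonneg.mpr hbc),
      mul_nonneg (sub_nonneg.mpr (mul_le_one₀ hk1 hk0 hk1))
        (sq_nonneg (s * ‖b‖ - t * ‖c‖)),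
      mul_nonneg (mul_nonneg hk0 hk0)
        (sub_nonneg.mpr (mul_self_le_mul_self hm0.le hsum))]
  nlinarith [norm_nonneg (s • b + t • c), mul_nonneg hm0.le hk0]
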